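/- Fix real constants A > 0, M ≥ 0, γ > 0, b > 1, ρ0 ∈ (0,1), and J > (M/(Aρ0))·(e^{Aγ} − 1). Let z : ℝ → ℝ be differentiable on [t_s, t_c] with z'(t) = A·z(t) + w(t) and |w(t)| ≤ M for all t ∈ [t_s, t_c], suppose |z(t_s)| = J and 0 ≤ t_c − t_s ≤ γ, and let t_0 ∈ ℝ be such that t_s ∈ [t_0, t_0 + bγ]. If the packet size g ∈ ℕ satisfies g ≥ 1 + log₂( A·b·γ / ln(1 + (ρ0 − (M/(J·A))·(e^{Aγ}−1)) / e^{Aγ}) ), then there exists an index j ∈ {0, 1, …, 2^{g−1} − 1} such that, setting q := t_0 + j·bγ/2^{g−1}, the estimate z̄ := sign(z(t_s))·J·e^{A(t_c − q)} satisfies |z(t_c) − z̄| ≤ ρ0·J. (This is the per-triggering-event content of Theorem 1: a quantization policy using at most g bits — one bit for sign(z(t_s)) and g−1 bits for a uniformly quantized triggering time over a window of length bγ — achieves jump error at most ρ0·J.) -/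

import Mathlib

open Set Filter

/-- If `f` has nonnegative derivative on `[a,b]`, then `f a ≤ f b`. -/
lemma mono_aux (f f' : ℝ → ℝ) (a b : ℝ) (hab : a ≤ b)
    (hf : ∀ t ∈ Icc a b, HasDerivAt f (f' t) t)
    (h0 : ∀ t ∈ Icc a b, 0 ≤ f' t) : f a ≤ f b := by
  have hc : ContinuousOn f (Icc a b) := fun t ht =>
    (hf t ht).continuousAt.continuousWithinAt
  have hint : interior (Icc a b) = Ioo a b := interior_Icc
  have hm : MonotoneOn f (Icc a b) := by
    apply monotoneOn_of_deriv_nonneg (convex_Icc a b) hc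
    · rw [hint]
      intro t ht
      exact ((hf t (Ioo_subset_Icc_self ht)).differentiableAt).differentiableWithinAt
    · rw [hint]
      intro t ht
      rw [(hf t (Ioo_subset_Icc_self ht)).deriv]
      exact h0 t (Ioo_subset_Icc_self ht)
  exact hm (left_mem_Icc.2 hab) (right_mem_Icc.2 hab) hab

/-- Grönwall-type bound. -/
lemma gronwall_aux (A M : ℝ) (z w : ℝ → ℝ) (ts tc : ℝ) (hA : 0 < A)
    (hle : ts ≤ tc)
    (hz : ∀ t ∈ Icc ts tc, HasDerivAt z (A * z t + w t) t)
    (hw : ∀ t ∈ Icc ts tc, |w t| ≤ M) :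
    |z tc - z ts * Real.exp (A * (tc - ts))| ≤
      M / A * (Real.exp (A * (tc - ts)) - 1) := by
  set F : ℝ → ℝ := fun t => z t * Real.exp (-(A * (t - ts))) with hFdef
  have hF : ∀ t ∈ Icc ts tc,
      HasDerivAt F (w t * Real.exp (-(A * (t - ts)))) t := by
    intro t ht
    have h1 : HasDerivAt (fun s => -(A * (s - ts))) (-A) t := by
      simpa using (((hasDerivAt_id t).sub_const ts).const_mul A).fun_neg
    have h2 : HasDerivAt (fun s => Real.exp (-(A * (s - ts))))
        (Real.exp (-(A * (t - ts))) * (-A)) t := h1.exp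
    have h3 := (hz t ht).fun_mul h2
    exact h3.congr_deriv (by ring)
  -- upper bound function
  have key : ∀ σ : ℝ, (∀ t ∈ Icc ts tc, σ * w t ≤ M) →
      σ * (F tc - F ts) ≤ M / A * (1 - Real.exp (-(A * (tc - ts)))) := by
    intro σ hσ
    have := mono_aux
      (fun t => M / A * (1 - Real.exp (-(A * (t - ts)))) - σ * (F t - F ts))
      (fun t => (M - σ * w t) * Real.exp (-(A * (t - ts)))) ts tc hle
      (by
        intro t ht
        have h1 : HasDerivAt (fun s => -(A * (s - ts))) (-A) t := by
          simpa using (((hasDerivAt_id t).sub_const ts).const_mul A).fun_neg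
        have h2 : HasDerivAt (fun s => Real.exp (-(A * (s - ts))))
            (Real.exp (-(A * (t - ts))) * (-A)) t := h1.exp
        have h4 : HasDerivAt (fun s => M / A * (1 - Real.exp (-(A * (s - ts)))))
            (M / A * (0 - Real.exp (-(A * (t - ts))) * (-A))) t :=
          ((hasDerivAt_const t (1:ℝ)).sub h2).const_mul (M / A)
        have h5 : HasDerivAt (fun s => σ * (F s - F ts))
            (σ * (w t * Real.exp (-(A * (t - ts))))) t :=
          (((hF t ht).sub_const (F ts))).const_mul σ
        have h6 := h4.fun_sub h5
        exact h6.congr_deriv (by field_simp; ring))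
      (by
        intro t ht
        have h7 : σ * w t ≤ M := hσ t ht
        have hep : (0:ℝ) < Real.exp (-(A * (t - ts))) := Real.exp_pos _
        show 0 ≤ (M - σ * w t) * Real.exp (-(A * (t - ts)))
        nlinarith)
    simp only [sub_self, mul_zero, neg_zero, Real.exp_zero] at this
    norm_num at this
    linarith [this]
  have hup : F tc - F ts ≤ M / A * (1 - Real.exp (-(A * (tc - ts)))) := by
    have := key 1 (fun t ht => by
      have := hw t ht; rw [abs_le] at this; linarith [this.2])
    simpa using this
  have hlo : -(F tc - F ts) ≤ M / A * (1 - Real.exp (-(A * (tc - ts)))) := by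
    have := key (-1) (fun t ht => by
      have := hw t ht; rw [abs_le] at this; linarith [this.1])
    simpa using this
  have habs : |F tc - F ts| ≤ M / A * (1 - Real.exp (-(A * (tc - ts)))) :=
    abs_le.2 ⟨by linarith, hup⟩
  have hexp : (0:ℝ) < Real.exp (A * (tc - ts)) := Real.exp_pos _
  have hFtc : F tc = z tc * Real.exp (-(A * (tc - ts))) := rfl
  have hFts : F ts = z ts := by simp [hFdef]
  have hrw : z tc - z ts * Real.exp (A * (tc - ts)) =
      (F tc - F ts) * Real.exp (A * (tc - ts)) := by
    rw [hFtc, hFts]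
    rw [sub_mul, mul_assoc, ← Real.exp_add, neg_add_cancel, Real.exp_zero, mul_one]
  rw [hrw, abs_mul, abs_of_pos hexp]
  calc |F tc - F ts| * Real.exp (A * (tc - ts))
      ≤ (M / A * (1 - Real.exp (-(A * (tc - ts))))) * Real.exp (A * (tc - ts)) := by
        apply mul_le_mul_of_nonneg_right habs hexp.le
    _ = M / A * (Real.exp (A * (tc - ts)) - 1) := by
        rw [mul_assoc, sub_mul, one_mul, ← Real.exp_add, neg_add_cancel, Real.exp_zero]

set_option maxHeartbeats 1000000 in
/-- **Theorem 1 (per-triggering-event form).**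
With `g` bits (one for the sign, `g − 1` for a uniformly quantized triggering
time over a window of length `b*γ`), where
`g ≥ 1 + log₂(A*b*γ / ln(1 + (ρ0 − (M/(J*A))(e^{Aγ}−1))/e^{Aγ}))`,
there is a grid point `q = t₀ + j*b*γ/2^(g-1)` such that the controller
estimate `z̄ = sign(z(t_s))·J·e^{A(t_c − q)}` satisfies `|z(t_c) − z̄| ≤ ρ0·J`. -/
theorem suff_packet_size
    (A M γ b ρ0 J : ℝ) (z w : ℝ → ℝ) (ts tc t0 : ℝ) (g : ℕ)
    (hA : 0 < A) (hM : 0 ≤ M) (hγ : 0 < γ) (hb : 1 < b)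
    (hρ0 : 0 < ρ0) (hρ1 : ρ0 < 1)
    (hJ : (M / (A * ρ0)) * (Real.exp (A * γ) - 1) < J)
    (hz : ∀ t ∈ Icc ts tc, HasDerivAt z (A * z t + w t) t)
    (hw : ∀ t ∈ Icc ts tc, |w t| ≤ M)
    (hzts : |z ts| = J)
    (hdelay0 : 0 ≤ tc - ts) (hdelayγ : tc - ts ≤ γ)
    (hts : ts ∈ Icc t0 (t0 + b * γ))
    (hg : (g : ℝ) ≥ 1 + Real.logb 2 (A * b * γ /
      Real.log (1 + (ρ0 - (M / (J * A)) * (Real.exp (A * γ) - 1)) / Real.exp (A * γ)))) :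
    ∃ j : ℕ, j < 2 ^ (g - 1) ∧
      |z tc - Real.sign (z ts) * J *
        Real.exp (A * (tc - (t0 + (j : ℝ) * (b * γ) / (2 : ℝ) ^ (g - 1))))| ≤ ρ0 * J := by
  set E := Real.exp (A * γ) with hEdef
  have hAγ : 0 < A * γ := mul_pos hA hγ
  have hE1 : 1 < E := by
    rw [hEdef]; calc (1:ℝ) = Real.exp 0 := (Real.exp_zero).symm
      _ < Real.exp (A * γ) := Real.exp_lt_exp.2 hAγ
  have hEpos : 0 < E := lt_trans one_pos hE1
  have hJpos : 0 < J := by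
    have h1 : 0 ≤ M / (A * ρ0) := div_nonneg hM (mul_pos hA hρ0).le
    have h2 : 0 ≤ E - 1 := by linarith
    nlinarith
  -- key constant
  set c := (ρ0 - (M / (J * A)) * (E - 1)) / E with hcdef
  have hρM : (M / (J * A)) * (E - 1) < ρ0 := by
    have hJA : 0 < J * A := mul_pos hJpos hA
    rw [div_mul_eq_mul_div] at hJ
    have h1 : M * (E - 1) < J * (A * ρ0) := (div_lt_iff₀ (mul_pos hA hρ0)).1 hJ
    rw [div_mul_eq_mul_div, div_lt_iff₀ hJA]
    nlinarith [h1]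
  have hc : 0 < c := div_pos (by linarith) hEpos
  have hlog : 0 < Real.log (1 + c) := Real.log_pos (by linarith)
  set X := A * b * γ / Real.log (1 + c) with hXdef
  have hbγ : 0 < b * γ := mul_pos (lt_trans one_pos hb) hγ
  have hX : 0 < X := div_pos (by nlinarith) hlog
  -- 2^(g-1) ≥ X
  have hcast : (g : ℝ) - 1 ≤ ((g - 1 : ℕ) : ℝ) := by
    rcases Nat.eq_zero_or_pos g with h | h
    · simp [h]
    · rw [Nat.cast_sub h]; simp
  have hpow : X ≤ (2 : ℝ) ^ (g - 1) := by
    have h1 : Real.logb 2 X ≤ ((g - 1 : ℕ) : ℝ) := by linarith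
    have h2 : X = (2:ℝ) ^ (Real.logb 2 X) := (Real.rpow_logb two_pos (by norm_num) hX).symm
    calc X = (2:ℝ) ^ (Real.logb 2 X) := h2
      _ ≤ (2:ℝ) ^ (((g - 1 : ℕ) : ℝ)) := by
          exact Real.rpow_le_rpow_left_iff (by norm_num : (1:ℝ) < 2) |>.2 h1
      _ = (2:ℝ) ^ (g - 1) := by rw [Real.rpow_natCast]
  have hpow1 : (1:ℝ) ≤ (2:ℝ) ^ (g - 1) := one_le_pow₀ (by norm_num)
  have hpowpos : (0:ℝ) < (2:ℝ) ^ (g - 1) := by linarith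
  set δ := b * γ / (2 : ℝ) ^ (g - 1) with hδdef
  have hδpos : 0 < δ := div_pos hbγ hpowpos
  have hδ : A * δ ≤ Real.log (1 + c) := by
    have h1 : A * b * γ ≤ 2 ^ (g - 1) * Real.log (1 + c) :=
      (div_le_iff₀ hlog).1 hpow
    have h2 : A * δ * 2 ^ (g - 1) = A * b * γ := by
      rw [hδdef]; field_simp
    have h3 : A * δ * 2 ^ (g - 1) ≤ Real.log (1 + c) * 2 ^ (g - 1) := by
      rw [h2]; linarith
    exact le_of_mul_le_mul_right h3 hpowpos
  -- choose j
  set jf := Nat.floor ((ts - t0) / δ) with hjfdef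
  set j := min jf (2 ^ (g - 1) - 1) with hjdef
  have hNpow : 1 ≤ 2 ^ (g - 1) := Nat.one_le_two_pow
  have hjlt : j < 2 ^ (g - 1) := by
    have : j ≤ 2 ^ (g-1) - 1 := min_le_right _ _
    omega
  refine ⟨j, hjlt, ?_⟩
  set q := t0 + (j : ℝ) * (b * γ) / (2 : ℝ) ^ (g - 1) with hqdef
  have hqeq : q = t0 + (j : ℝ) * δ := by rw [hqdef, hδdef]; ring
  have hts0 : 0 ≤ ts - t0 := by linarith [hts.1]
  have hq1 : q ≤ ts := by
    rw [hqeq]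
    have h1 : (j : ℝ) ≤ (ts - t0) / δ := by
      calc (j:ℝ) ≤ (jf:ℝ) := by exact_mod_cast Nat.cast_le.2 (min_le_left _ _)
        _ ≤ (ts - t0)/δ := Nat.floor_le (div_nonneg hts0 hδpos.le)
    have := (le_div_iff₀ hδpos).1 h1
    linarith
  have hcastpow : ((2 ^ (g-1) : ℕ) : ℝ) = (2:ℝ) ^ (g-1) := by push_cast; ring
  have hq2 : ts - q ≤ δ := by
    rcases le_or_gt jf (2 ^ (g-1) - 1) with h | h
    · have hj_eq : j = jf := min_eq_left h
      have h2 : (ts - t0) / δ < (jf : ℝ) + 1 := Nat.lt_floor_add_one _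
      rw [div_lt_iff₀ hδpos] at h2
      rw [hqeq, hj_eq]
      linarith [h2]
    · have hj_eq : j = 2 ^ (g-1) - 1 := min_eq_right (by omega)
      have hcast1 : ((j:ℕ):ℝ) = (2:ℝ) ^ (g-1) - 1 := by
        rw [hj_eq, Nat.cast_sub hNpow, hcastpow]; norm_num
      have hbound : ts ≤ t0 + b * γ := hts.2
      have hbγeq : b * γ = (2:ℝ) ^ (g-1) * δ := by
        rw [hδdef]; field_simp
      rw [hqeq, hcast1]
      linarith [hbound, hbγeq]
  have hq0 : 0 ≤ ts - q := by linarith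
  -- Gronwall
  have hgron := gronwall_aux A M z w ts tc hA (by linarith) hz hw
  have hτE : Real.exp (A * (tc - ts)) ≤ E := by
    rw [hEdef]; exact Real.exp_le_exp.2 (by nlinarith)
  have hτ1 : 1 ≤ Real.exp (A * (tc - ts)) :=
    Real.one_le_exp (by nlinarith)
  have hMA : 0 ≤ M / A := div_nonneg hM hA.le
  have hgron2 : |z tc - z ts * Real.exp (A * (tc - ts))| ≤ M / A * (E - 1) := by
    refine le_trans hgron ?_
    apply mul_le_mul_of_nonneg_left (by linarith) hMA
  -- sign
  have hzts_ne : z ts ≠ 0 := by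
    intro h; rw [h] at hzts; simp at hzts; linarith [hzts, hJpos]
  have hsign : Real.sign (z ts) * J = z ts := by
    rcases lt_or_gt_of_ne hzts_ne with h | h
    · rw [Real.sign_of_neg h, ← hzts, abs_of_neg h]; ring
    · rw [Real.sign_of_pos h, ← hzts, abs_of_pos h]; ring
  -- exponential comparison
  have hexpδ : Real.exp (A * δ) ≤ 1 + c := by
    calc Real.exp (A * δ) ≤ Real.exp (Real.log (1 + c)) := Real.exp_le_exp.2 hδ
      _ = 1 + c := Real.exp_log (by linarith)
  have hexpq : Real.exp (A * (tc - q)) =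
      Real.exp (A * (tc - ts)) * Real.exp (A * (ts - q)) := by
    rw [← Real.exp_add]; ring_nf
  have hexpts1 : 1 ≤ Real.exp (A * (ts - q)) :=
    Real.one_le_exp (by nlinarith)
  have hexptsδ : Real.exp (A * (ts - q)) ≤ 1 + c := by
    refine le_trans (Real.exp_le_exp.2 ?_) hexpδ
    nlinarith
  -- final estimate
  have hdiff : |z ts * Real.exp (A * (tc - ts)) - z ts * Real.exp (A * (tc - q))| ≤
      J * E * c := by
    rw [← mul_sub, abs_mul, hzts, hexpq, ← mul_one_sub, abs_mul,
      abs_of_pos (Real.exp_pos _)]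
    have h1 : |1 - Real.exp (A * (ts - q))| = Real.exp (A * (ts - q)) - 1 := by
      rw [abs_sub_comm, abs_of_nonneg (by linarith)]
    rw [h1]
    have h2 : Real.exp (A * (ts - q)) - 1 ≤ c := by linarith
    calc J * (Real.exp (A * (tc - ts)) * (Real.exp (A * (ts - q)) - 1))
        ≤ J * (E * c) := by
          apply mul_le_mul_of_nonneg_left _ hJpos.le
          apply mul_le_mul hτE h2 (by linarith) hEpos.le
      _ = J * E * c := by ring
  have hfinal : M / A * (E - 1) + J * E * c = ρ0 * J := by
    rw [hcdef]
    field_simp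
    ring
  calc |z tc - Real.sign (z ts) * J * Real.exp (A * (tc - q))|
      = |z tc - z ts * Real.exp (A * (tc - q))| := by rw [hsign]
    _ ≤ |z tc - z ts * Real.exp (A * (tc - ts))| +
        |z ts * Real.exp (A * (tc - ts)) - z ts * Real.exp (A * (tc - q))| := by
          have := abs_sub_le (z tc - z ts * Real.exp (A * (tc - ts))) 0
          calc |z tc - z ts * Real.exp (A * (tc - q))|
              = |(z tc - z ts * Real.exp (A * (tc - ts))) +
                (z ts * Real.exp (A * (tc - ts)) - z ts * Real.exp (A * (tc - q)))| := by
                  ring_nf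
            _ ≤ _ := abs_add_le _ _
    _ ≤ M / A * (E - 1) + J * E * c := add_le_add hgron2 hdiff
    _ = ρ0 * J := hfinal
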